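/- With δ := ω·(α - σ(α)), one has δ + σ(δ) = algebraMap K R (ε(1)) · δ · σ(δ). -/

import Mathlib

open Polynomial TensorProduct

noncomputable section

variable {K : Type*} [CommRing K]

/-- The quadratic `K`-algebra `K[X]/(X² - s·X + p)`. -/
abbrev Quad (s p : K) : Type _ := AdjoinRoot (X ^ 2 - C s * X + C p)

/-- The image of `X`, i.e. the generator `α`. -/
def qα (s p : K) : Quad s p := AdjoinRoot.root _

lemma quad_aeval_root (s p : K) :
    (aeval (qα s p)) (X ^ 2 - C s * X + C p) = 0 := by
  simp [qα, AdjoinRoot.aeval_eq, AdjoinRoot.mk_self]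

/-- The involution `σ` of the quadratic algebra, with `σ α = s - α`. -/
def qσ (s p : K) : Quad s p →ₐ[K] Quad s p :=
  AdjoinRoot.liftAlgHom _ (Algebra.ofId K (Quad s p)) (algebraMap K (Quad s p) s - qα s p) (by
    have h0 : (aeval (algebraMap K (Quad s p) s - qα s p)) (X ^ 2 - C s * X + C p) = 0 := by
      have h := quad_aeval_root s p
      simp only [map_add, map_sub, map_mul, map_pow, aeval_X, aeval_C] at h ⊢
      linear_combination h
    exact h0)
lemma quad_repr (s p : K) (z : Quad s p) :
    ∃ a b : K, z = algebraMap K (Quad s p) a + algebraMap K (Quad s p) b * qα s p := by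
  rcases subsingleton_or_nontrivial K with h | h
  · haveI : Subsingleton (Quad s p) := Module.subsingleton K _
    exact ⟨0, 0, Subsingleton.elim _ _⟩
  obtain ⟨f, rfl⟩ := AdjoinRoot.mk_surjective z
  set g : K[X] := X ^ 2 - C s * X + C p with hg
  have hm : g.Monic := by rw [hg]; monicity!
  have hdeg : (f %ₘ g).degree ≤ 1 := by
    have h2 : g.degree = 2 := by rw [hg]; compute_degree!
    have := degree_modByMonic_lt f hm
    rw [h2] at this
    exact Order.le_of_lt_succ (by exact_mod_cast this)
  have hr := f.modByMonic_add_div g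
  have h1 : AdjoinRoot.mk g f = AdjoinRoot.mk g (f %ₘ g) := by
    conv_lhs => rw [← hr]
    rw [map_add, map_mul, AdjoinRoot.mk_self, zero_mul, add_zero]
  refine ⟨(f %ₘ g).coeff 0, (f %ₘ g).coeff 1, ?_⟩
  rw [h1]
  conv_lhs => rw [eq_X_add_C_of_degree_le_one hdeg]
  rw [map_add, map_mul, AdjoinRoot.mk_C, AdjoinRoot.mk_C, AdjoinRoot.mk_X]
  rw [add_comm]; rfl

lemma qσ_root (s p : K) : qσ s p (qα s p) = algebraMap K (Quad s p) s - qα s p := by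
  simp [qσ, qα, AdjoinRoot.liftAlgHom_root]


/-- With `δ = ω·(α - σ α)`, one has `δ + σ δ = ε(1)·δ·σ(δ)`. -/
theorem stmt5 (s p : K) (ω : (Quad s p)ˣ) (ε : Quad s p →ₗ[K] K)
    (hω : ε (ω : Quad s p) = 0) (hωα : ε ((ω : Quad s p) * qα s p) = 1) :
    (ω : Quad s p) * (qα s p - qσ s p (qα s p))
        + qσ s p ((ω : Quad s p) * (qα s p - qσ s p (qα s p)))
      = algebraMap K (Quad s p) (ε 1) *
          ((ω : Quad s p) * (qα s p - qσ s p (qα s p))) *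
          qσ s p ((ω : Quad s p) * (qα s p - qσ s p (qα s p))) := by
  obtain ⟨a, b, hab⟩ := quad_repr s p (ω : Quad s p)
  have hq := quad_aeval_root s p
  simp only [map_add, map_sub, map_mul, map_pow, aeval_X, aeval_C] at hq
  have hsq : ε (qα s p ^ 2) = s * ε (qα s p) - p * ε 1 := by
    have h2 : qα s p ^ 2 = s • qα s p - p • (1 : Quad s p) := by
      rw [Algebra.smul_def, Algebra.smul_def, mul_one]
      linear_combination hq
    rw [h2, map_sub, map_smul, map_smul, smul_eq_mul, smul_eq_mul]
  have h1 : a * ε 1 + b * ε (qα s p) = 0 := by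
    rw [hab] at hω
    simpa only [Algebra.algebraMap_eq_smul_one, smul_mul_assoc, one_mul, map_add,
      map_smul, smul_eq_mul] using hω
  have h2 : a * ε (qα s p) + b * (s * ε (qα s p) - p * ε 1) = 1 := by
    rw [hab] at hωα
    have hexp : (algebraMap K (Quad s p) a + algebraMap K (Quad s p) b * qα s p) * qα s p
        = a • qα s p + b • (qα s p ^ 2) := by
      rw [Algebra.smul_def, Algebra.smul_def]; ring
    rw [hexp, map_add, map_smul, map_smul, smul_eq_mul, smul_eq_mul, hsq] at hωα
    exact hωα
  have H1 := congrArg (algebraMap K (Quad s p)) h1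
  have H2 := congrArg (algebraMap K (Quad s p)) h2
  simp only [map_add, map_mul, map_sub, map_zero, map_one] at H1 H2
  rw [hab]
  simp only [map_add, map_sub, map_mul, AlgHom.commutes, qσ_root]
  set A := algebraMap K (Quad s p)
  set α : Quad s p := qα s p
  linear_combination
    (4 * A b + 4 * A (ε 1) * (A a ^ 2 + A a * A b * A s + A b ^ 2 * A p)
      - A (ε 1) * A b ^ 2 * (A s ^ 2 - 4 * A p)
      - 4 * A (ε 1) * A b ^ 2 * (α ^ 2 - A s * α + A p)) * hq
    + (A a + A b * A s) * (A s ^ 2 - 4 * A p) * H1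
    - A b * (A s ^ 2 - 4 * A p) * H2

end
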